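/- Let ν: Λ_{n-1} → Λ_n be the map σ ↦ Σ_{τ ↦ σ} τ. Then for every nonzero f ∈ Λ_{n-1}: μ(ν(f)) = μ(f) and λ(ν(f)) = p^n - p^{n-1} + λ(f). -/

import Mathlib

open MonoidAlgebra Finset

/-- `G_n`: cyclic group of order `p^n`. -/
abbrev Gn (p n : ℕ) := Multiplicative (ZMod (p ^ n))

/-- `Λ_n = ℤ_p[G_n]`. -/
abbrev Lam (p : ℕ) [Fact p.Prime] (n : ℕ) := MonoidAlgebra ℤ_[p] (Gn p n)

/-- `ξ_n`: sum of the elements of the subgroup of order `p`. -/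
noncomputable def xi (p : ℕ) [Fact p.Prime] (n : ℕ) : Lam p n :=
  ∑ σ ∈ Finset.univ.filter (fun σ : Gn p n => σ ^ p = 1), MonoidAlgebra.of ℤ_[p] (Gn p n) σ

/-- The natural surjection `G_{n+1} →* G_n`. -/
noncomputable def projHom (p n : ℕ) : Gn p (n+1) →* Gn p n :=
  AddMonoidHom.toMultiplicative
    (ZMod.castHom (pow_dvd_pow p (Nat.le_succ n)) (ZMod (p^n))).toAddMonoidHom

/-- `π_{n+1/n} : Λ_{n+1} →+* Λ_n`, the induced projection of group algebras. -/
noncomputable def piMap (p : ℕ) [Fact p.Prime] (n : ℕ) : Lam p (n+1) →+* Lam p n :=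
  MonoidAlgebra.mapDomainRingHom ℤ_[p] (projHom p n)

/-- `ν_{n/n+1} : Λ_n → Λ_{n+1}`, sending `σ` to the sum of its preimages. -/
noncomputable def nuMap (p : ℕ) [Fact p.Prime] (n : ℕ) (f : Lam p n) : Lam p (n+1) :=
  ∑ τ : Gn p (n+1), MonoidAlgebra.single τ (f.coeff (projHom p n τ))

/-- Reduction mod `p`: `ℤ_p[G_n] → 𝔽_p[G_n]` (coefficientwise). -/
noncomputable def red (p : ℕ) [Fact p.Prime] (n : ℕ) (f : Lam p n) :
    MonoidAlgebra (ZMod p) (Gn p n) :=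
  MonoidAlgebra.ofCoeff (Finsupp.mapRange (PadicInt.toZMod) (map_zero _) f.coeff)

/-- The augmentation ideal `Ĩ_n` of `𝔽_p[G_n]`. -/
noncomputable def augIdeal (p : ℕ) [Fact p.Prime] (n : ℕ) :
    Ideal (MonoidAlgebra (ZMod p) (Gn p n)) :=
  RingHom.ker ((MonoidAlgebra.lift (ZMod p) (ZMod p) (Gn p n)) 1).toRingHom

set_option linter.unusedSectionVars false
open Polynomial

section aux
variable (p : ℕ) [hp : Fact p.Prime]

instance instNZ (m : ℕ) : NeZero (p ^ m) := ⟨pow_ne_zero m hp.out.ne_zero⟩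

abbrev Rm (m : ℕ) := MonoidAlgebra (ZMod p) (Gn p m)

noncomputable def gen (m : ℕ) : Gn p m := Multiplicative.ofAdd 1

noncomputable def tm (m : ℕ) : Rm p m :=
  MonoidAlgebra.of (ZMod p) (Gn p m) (gen p m) - 1

lemma gen_pow (m k : ℕ) : (gen p m) ^ k = Multiplicative.ofAdd ((k : ZMod (p^m))) := by
  simp [gen, ← ofAdd_nsmul, nsmul_eq_mul]

lemma eq_gen_pow {m : ℕ} (σ : Gn p m) : σ = (gen p m) ^ ((Multiplicative.toAdd σ).val) := by
  rw [gen_pow, ZMod.natCast_val, ZMod.cast_id]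
  rfl

lemma gen_pow_card (m : ℕ) : (gen p m) ^ (p ^ m) = 1 := by
  rw [gen_pow]
  simp

instance instCharP (m : ℕ) : CharP (Rm p m) p :=
  charP_of_injective_ringHom (f := algebraMap (ZMod p) (Rm p m))
    (algebraMap (ZMod p) (Rm p m)).injective p

lemma t_pow (m k : ℕ) : (tm p m) ^ (p ^ k) =
    MonoidAlgebra.of (ZMod p) (Gn p m) ((gen p m) ^ (p ^ k)) - 1 := by
  rw [tm, sub_pow_char_pow, one_pow, map_pow]

lemma t_pow_card (m : ℕ) : (tm p m) ^ (p ^ m) = 0 := by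
  rw [t_pow, gen_pow_card, map_one, sub_self]

end aux
set_option linter.unusedSectionVars false

section aux2
variable (p : ℕ) [hp : Fact p.Prime]

noncomputable def augR (m : ℕ) : Rm p m →+* ZMod p :=
  ((MonoidAlgebra.lift (ZMod p) (ZMod p) (Gn p m)) 1).toRingHom

lemma augR_of (m : ℕ) (σ : Gn p m) :
    augR p m (MonoidAlgebra.of (ZMod p) (Gn p m) σ) = 1 := by
  simp [augR]

lemma of_mem_span (m : ℕ) (σ : Gn p m) :
    MonoidAlgebra.of (ZMod p) (Gn p m) σ - 1 ∈ Ideal.span {tm p m} := by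
  rw [eq_gen_pow p σ, map_pow]
  rw [Ideal.mem_span_singleton, tm]
  simpa using sub_dvd_pow_sub_pow (MonoidAlgebra.of (ZMod p) (Gn p m) (gen p m)) 1 ((Multiplicative.toAdd σ).val)

lemma augIdeal'_eq_span (m : ℕ) :
    RingHom.ker (augR p m) = Ideal.span {tm p m} := by
  apply le_antisymm
  · intro f hf
    have hker : augR p m f = 0 := hf
    have hsum : f = ∑ σ ∈ f.coeff.support, (f.coeff σ) • (MonoidAlgebra.of (ZMod p) (Gn p m) σ - 1) := by
      have h1 : f = ∑ σ ∈ f.coeff.support, MonoidAlgebra.single σ (f.coeff σ) := by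
        conv_lhs => rw [← MonoidAlgebra.sum_coeff_single f]
        rfl
      have h2 : augR p m f = ∑ σ ∈ f.coeff.support, f.coeff σ := by
        conv_lhs => rw [h1]
        rw [map_sum]
        refine Finset.sum_congr rfl fun σ _ => ?_
        simp [augR, MonoidAlgebra.lift_single]
      have h3 : ∑ σ ∈ f.coeff.support, (f.coeff σ) • (MonoidAlgebra.of (ZMod p) (Gn p m) σ) = f := by
        conv_rhs => rw [h1]
        refine Finset.sum_congr rfl fun σ _ => ?_
        simp [MonoidAlgebra.smul_single', MonoidAlgebra.of_apply]
      have h4 : ∑ σ ∈ f.coeff.support, (f.coeff σ) • (MonoidAlgebra.of (ZMod p) (Gn p m) σ - 1)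
          = (∑ σ ∈ f.coeff.support, (f.coeff σ) • (MonoidAlgebra.of (ZMod p) (Gn p m) σ))
            - (∑ σ ∈ f.coeff.support, (f.coeff σ) • (1 : Rm p m)) := by
        rw [← Finset.sum_sub_distrib]
        exact Finset.sum_congr rfl fun σ _ => smul_sub _ _ _
      rw [h4, h3, ← Finset.sum_smul, ← h2, hker, zero_smul, sub_zero]
    rw [hsum]
    exact Ideal.sum_mem _ fun σ _ => Submodule.smul_of_tower_mem _ _ (of_mem_span p m σ)
  · rw [Ideal.span_le, Set.singleton_subset_iff]
    have : augR p m (tm p m) = 0 := by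
      rw [tm, map_sub, augR_of, map_one, sub_self]
    exact this

noncomputable def phi (m : ℕ) : Polynomial (ZMod p) →ₐ[ZMod p] Rm p m :=
  Polynomial.aeval (tm p m)

lemma phi_X_add_one (m : ℕ) :
    phi p m (X + 1) = MonoidAlgebra.of (ZMod p) (Gn p m) (gen p m) := by
  simp [phi, tm]

lemma phi_mem_range (m : ℕ) (f : Rm p m) : f ∈ (phi p m).range := by
  induction f using MonoidAlgebra.induction with
  | zero => exact zero_mem _
  | single_add σ c f _ _ ih =>
      refine add_mem ?_ ih
      have h1 : (MonoidAlgebra.single σ c : Rm p m) = c • MonoidAlgebra.of (ZMod p) (Gn p m) σ := by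
        simp [MonoidAlgebra.smul_single', MonoidAlgebra.of_apply]
      rw [h1, eq_gen_pow p σ, map_pow]
      refine Subalgebra.smul_mem _ (Subalgebra.pow_mem _ ?_ _) _
      exact ⟨X + 1, phi_X_add_one p m⟩

lemma phi_surjective (m : ℕ) : Function.Surjective (phi p m) := fun f =>
  phi_mem_range p m f

lemma ker_phi (m : ℕ) :
    RingHom.ker (phi p m).toRingHom = Ideal.span {(X : Polynomial (ZMod p)) ^ (p ^ m)} := by
  have heval : ((X : Polynomial (ZMod p)) ^ (p ^ m)).eval₂
      (algebraMap (ZMod p) (Rm p m)) (tm p m) = 0 := by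
    rw [eval₂_X_pow, t_pow_card]
  set q := p ^ m with hq
  set fX := (X : Polynomial (ZMod p)) ^ q with hfX
  let Q := AdjoinRoot fX
  let ψ : Q →+* Rm p m := AdjoinRoot.lift (algebraMap (ZMod p) (Rm p m)) (tm p m) heval
  have hψmk : ∀ u : Polynomial (ZMod p), ψ (AdjoinRoot.mk fX u) = phi p m u := by
    intro u
    rw [AdjoinRoot.lift_mk]
    simp [phi, Polynomial.aeval_def]
  have hsurj : Function.Surjective ψ := by
    intro y
    obtain ⟨u, hu⟩ := phi_surjective p m y
    exact ⟨AdjoinRoot.mk fX u, by rw [hψmk, hu]⟩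
  have hmonic : fX.Monic := monic_X_pow q
  let b := AdjoinRoot.powerBasisAux' hmonic
  haveI : Fintype Q := Module.fintypeOfFintype b
  have hcardQ : Nat.card Q = p ^ q := by
    rw [Nat.card_eq_fintype_card, Module.card_fintype b, ZMod.card, Fintype.card_fin,
      natDegree_X_pow]
  have hcardR : Nat.card (Rm p m) = p ^ q := by
    have e0 : Nat.card (Rm p m) = Nat.card (Gn p m →₀ ZMod p) :=
      Nat.card_congr MonoidAlgebra.coeffEquiv
    have e1 : Nat.card (Gn p m →₀ ZMod p) = Nat.card (Gn p m → ZMod p) :=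
      Nat.card_congr Finsupp.equivFunOnFinite
    have e2 : Nat.card (Gn p m) = p ^ m := by
      have : Nat.card (Gn p m) = Nat.card (ZMod (p ^ m)) := rfl
      rw [this, Nat.card_zmod]
    rw [e0, e1, Nat.card_fun, Nat.card_zmod, e2]
  have hbij : Function.Bijective ψ := by
    rw [Nat.bijective_iff_surjective_and_card]
    exact ⟨hsurj, by rw [hcardQ, hcardR]⟩
  apply le_antisymm
  · intro u hu
    have h0 : ψ (AdjoinRoot.mk fX u) = ψ 0 := by
      rw [map_zero, hψmk]
      exact hu
    have := hbij.injective h0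
    rwa [AdjoinRoot.mk_eq_zero, ← Ideal.mem_span_singleton] at this
  · rw [Ideal.span_le, Set.singleton_subset_iff]
    show phi p m (X ^ q) = 0
    simp [phi, t_pow_card, hq]

lemma ann_lemma (m j : ℕ) (hj : j ≤ p ^ m) (y : Rm p m)
    (hy : (tm p m) ^ j * y = 0) : ∃ d, y = d * (tm p m) ^ (p ^ m - j) := by
  obtain ⟨u, hu⟩ := phi_surjective p m y
  have hker : X ^ j * u ∈ RingHom.ker (phi p m).toRingHom := by
    show phi p m (X ^ j * u) = 0
    rw [map_mul, map_pow, hu]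
    have : phi p m X = tm p m := by simp [phi]
    rw [this, hy]
  rw [ker_phi, Ideal.mem_span_singleton] at hker
  have hsplit : (X : Polynomial (ZMod p)) ^ (p ^ m) = X ^ j * X ^ (p ^ m - j) := by
    rw [← pow_add, Nat.add_sub_cancel' hj]
  rw [hsplit, mul_dvd_mul_iff_left (pow_ne_zero j (X_ne_zero))] at hker
  obtain ⟨v, hv⟩ := hker
  refine ⟨phi p m v, ?_⟩
  rw [← hu, hv, map_mul, map_pow]
  have : phi p m X = tm p m := by simp [phi]
  rw [this]
  ring

lemma geom_poly : ∑ j ∈ range p, ((X : Polynomial (ZMod p)) + 1) ^ j = X ^ (p - 1) := by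
  have h := geom_sum_mul ((X : Polynomial (ZMod p)) + 1) p
  rw [add_sub_cancel_right] at h
  have hc : ((X : Polynomial (ZMod p)) + 1) ^ p = X ^ p + 1 := by
    rw [add_pow_char]
    simp
  rw [hc, add_sub_cancel_right] at h
  apply mul_right_cancel₀ (X_ne_zero (R := ZMod p))
  rw [h, ← pow_succ, Nat.sub_add_cancel hp.out.one_lt.le]

lemma exp_arith (m : ℕ) : p ^ m * (p - 1) = p ^ (m+1) - p ^ m := by
  rw [Nat.mul_sub, mul_one, ← pow_succ]

lemma xi_eq (m : ℕ) :
    ∑ j ∈ range p,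
      (MonoidAlgebra.of (ZMod p) (Gn p (m+1)) ((gen p (m+1)) ^ (p ^ m))) ^ j
    = (tm p (m+1)) ^ (p ^ (m+1) - p ^ m) := by
  have h := congrArg (Polynomial.aeval ((tm p (m+1)) ^ (p ^ m))) (geom_poly p)
  rw [map_sum, map_pow, aeval_X] at h
  have hof : (tm p (m+1)) ^ (p ^ m) + 1
      = MonoidAlgebra.of (ZMod p) (Gn p (m+1)) ((gen p (m+1)) ^ (p ^ m)) := by
    rw [t_pow]
    ring
  calc ∑ j ∈ range p,
      (MonoidAlgebra.of (ZMod p) (Gn p (m+1)) ((gen p (m+1)) ^ (p ^ m))) ^ j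
      = ∑ j ∈ range p, ((tm p (m+1)) ^ (p ^ m) + 1) ^ j := by rw [hof]
    _ = ((tm p (m+1)) ^ (p ^ m)) ^ (p - 1) := by
        rw [← h]
        refine Finset.sum_congr rfl fun j _ => ?_
        rw [map_pow, map_add, aeval_X, map_one]
    _ = (tm p (m+1)) ^ (p ^ (m+1) - p ^ m) := by rw [← pow_mul, exp_arith]

end aux2

section fiber
variable (p : ℕ) [hp : Fact p.Prime] (n : ℕ)

lemma augIdeal_eq_span (m : ℕ) : augIdeal p m = Ideal.span {tm p m} :=
  augIdeal'_eq_span p m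

lemma projHom_ofAdd (x : ZMod (p ^ (n+1))) :
    projHom p n (Multiplicative.ofAdd x)
      = Multiplicative.ofAdd ((ZMod.castHom (pow_dvd_pow p (Nat.le_succ n)) (ZMod (p^n))) x) :=
  rfl

lemma projHom_gen : projHom p n (gen p (n+1)) = gen p n := by
  rw [gen, projHom_ofAdd, map_one]
  rfl

noncomputable def sec (σ : Gn p n) : Gn p (n+1) :=
  Multiplicative.ofAdd (((Multiplicative.toAdd σ).val : ZMod (p^(n+1))))

lemma proj_sec (σ : Gn p n) : projHom p n (sec p n σ) = σ := by
  rw [sec, projHom_ofAdd, map_natCast, ZMod.natCast_val, ZMod.cast_id]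
  rfl

noncomputable def Fmap (kσ : ZMod p × Gn p n) : Gn p (n+1) :=
  (gen p (n+1)) ^ ((kσ.1).val * p ^ n) * sec p n kσ.2

lemma proj_Fmap (kσ : ZMod p × Gn p n) : projHom p n (Fmap p n kσ) = kσ.2 := by
  rw [Fmap, map_mul, map_pow, projHom_gen, proj_sec, gen_pow]
  have : (((kσ.1).val * p ^ n : ℕ) : ZMod (p ^ n)) = 0 := by
    simp [Nat.cast_mul]
  rw [this]
  simp

lemma Fmap_bijective : Function.Bijective (Fmap p n) := by
  haveI : NeZero p := ⟨hp.out.ne_zero⟩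
  rw [Fintype.bijective_iff_injective_and_card]
  constructor
  · rintro ⟨k1, σ1⟩ ⟨k2, σ2⟩ h
    have hσ : σ1 = σ2 := by
      have := congrArg (projHom p n) h
      rwa [proj_Fmap, proj_Fmap] at this
    subst hσ
    have hgen : (gen p (n+1)) ^ (k1.val * p ^ n) = (gen p (n+1)) ^ (k2.val * p ^ n) := by
      have := mul_right_cancel h
      exact this
    rw [gen_pow, gen_pow] at hgen
    have hcast : ((k1.val * p ^ n : ℕ) : ZMod (p ^ (n+1)))
        = ((k2.val * p ^ n : ℕ) : ZMod (p ^ (n+1))) := by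
      exact congrArg Multiplicative.toAdd hgen
    have hlt : ∀ k : ZMod p, k.val * p ^ n < p ^ (n+1) := by
      intro k
      have h1 : k.val * p ^ n < p * p ^ n :=
        (Nat.mul_lt_mul_right (Nat.pow_pos hp.out.pos)).mpr (ZMod.val_lt k)
      calc k.val * p ^ n < p * p ^ n := h1
        _ = p ^ (n+1) := by ring
    have hval := congrArg ZMod.val hcast
    rw [ZMod.val_cast_of_lt (hlt k1), ZMod.val_cast_of_lt (hlt k2)] at hval
    have hk : k1.val = k2.val :=
      Nat.eq_of_mul_eq_mul_right (Nat.pow_pos hp.out.pos) hval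
    have : k1 = k2 := by
      have := congrArg (fun a : ℕ => (a : ZMod p)) hk
      simpa [ZMod.natCast_val, ZMod.cast_id] using this
    rw [this]
  · rw [Fintype.card_prod]
    have c1 : Fintype.card (ZMod p) = p := ZMod.card p
    have c2 : Fintype.card (Gn p n) = p ^ n := by
      rw [Fintype.card_multiplicative, ZMod.card]
    have c3 : Fintype.card (Gn p (n+1)) = p ^ (n+1) := by
      rw [Fintype.card_multiplicative, ZMod.card]
    rw [c1, c2, c3]
    ring

noncomputable def Smap (c : Rm p n) : Rm p (n+1) :=
  ∑ σ : Gn p n, MonoidAlgebra.single (sec p n σ) (c.coeff σ)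

noncomputable def pibar : Rm p (n+1) →+* Rm p n :=
  MonoidAlgebra.mapDomainRingHom (ZMod p) (projHom p n)

lemma pibar_single (τ : Gn p (n+1)) (c : ZMod p) :
    pibar p n (MonoidAlgebra.single τ c) = MonoidAlgebra.single (projHom p n τ) c := by
  show MonoidAlgebra.mapDomain (projHom p n) (MonoidAlgebra.single τ c) = _
  rw [MonoidAlgebra.mapDomain_single]

lemma Smap_single (σ0 : Gn p n) (c : ZMod p) :
    Smap p n (MonoidAlgebra.single σ0 c) = MonoidAlgebra.single (sec p n σ0) c := by
  rw [Smap]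
  rw [Finset.sum_eq_single σ0]
  · rw [MonoidAlgebra.coeff_single, Finsupp.single_eq_same]
  · intro σ _ hne
    rw [MonoidAlgebra.coeff_single, Finsupp.single_eq_of_ne' (Ne.symm hne), MonoidAlgebra.single_zero]
  · intro h
    exact absurd (Finset.mem_univ σ0) h

lemma Smap_add (x y : Rm p n) : Smap p n (x + y) = Smap p n x + Smap p n y := by
  rw [Smap, Smap, Smap, ← Finset.sum_add_distrib]
  refine Finset.sum_congr rfl fun σ _ => ?_
  rw [MonoidAlgebra.coeff_add, Finsupp.add_apply, MonoidAlgebra.single_add]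

lemma pibar_Smap (c : Rm p n) : pibar p n (Smap p n c) = c := by
  rw [Smap, map_sum]
  have h1 : ∀ σ : Gn p n, pibar p n (MonoidAlgebra.single (sec p n σ) (c.coeff σ))
      = MonoidAlgebra.single σ (c.coeff σ) := by
    intro σ
    rw [pibar_single, proj_sec]
  rw [Finset.sum_congr rfl fun σ _ => h1 σ]
  ext τ
  rw [MonoidAlgebra.coeff_sum, Finset.sum_apply']
  rw [Finset.sum_eq_single τ]
  · rw [MonoidAlgebra.coeff_single, Finsupp.single_eq_same]
  · intro σ _ hne
    rw [MonoidAlgebra.coeff_single, Finsupp.single_eq_of_ne' hne]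
  · intro h
    exact absurd (Finset.mem_univ τ) h

lemma pibar_t : pibar p n (tm p (n+1)) = tm p n := by
  rw [tm, map_sub, map_one, tm]
  congr 1
  show pibar p n (MonoidAlgebra.single (gen p (n+1)) (1 : ZMod p)) = _
  rw [pibar_single, projHom_gen]
  rfl

lemma K_single (τ : Gn p (n+1)) (c : ZMod p) :
    (MonoidAlgebra.single τ c : Rm p (n+1)) - MonoidAlgebra.single (sec p n (projHom p n τ)) c
      ∈ Ideal.span {tm p (n+1) ^ (p ^ n)} := by
  obtain ⟨⟨k, σ⟩, hkσ⟩ := (Fmap_bijective p n).surjective τ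
  have hproj : projHom p n τ = σ := by rw [← hkσ, proj_Fmap]
  set a : Rm p (n+1) := MonoidAlgebra.single ((gen p (n+1)) ^ (k.val * p ^ n)) (1 : ZMod p) with ha
  set b : Rm p (n+1) := MonoidAlgebra.single (sec p n σ) c with hb
  have h1 : (MonoidAlgebra.single τ c : Rm p (n+1)) = a * b := by
    rw [ha, hb, MonoidAlgebra.single_mul_single, one_mul, ← hkσ]
    rfl
  rw [h1, hproj, ← hb]
  have h2 : a * b - b = (a - 1) * b := by ring
  rw [h2]
  refine Ideal.mem_span_singleton.mpr (dvd_mul_of_dvd_left ?_ _)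
  have h3 : a = (MonoidAlgebra.of (ZMod p) (Gn p (n+1)) ((gen p (n+1)) ^ (p ^ n))) ^ k.val := by
    rw [ha, ← map_pow, ← pow_mul, mul_comm (p ^ n) k.val]
    rfl
  rw [h3, t_pow]
  simpa using sub_dvd_pow_sub_pow
    (MonoidAlgebra.of (ZMod p) (Gn p (n+1)) ((gen p (n+1)) ^ (p ^ n))) 1 k.val

lemma K_lemma (z : Rm p (n+1)) :
    z - Smap p n (pibar p n z) ∈ Ideal.span {tm p (n+1) ^ (p ^ n)} := by
  induction z using MonoidAlgebra.induction with
  | zero =>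
      rw [map_zero]
      have : Smap p n (0 : Rm p n) = 0 := by
        rw [Smap]
        simp
      rw [this, sub_zero]
      exact zero_mem _
  | single_add τ c f _ _ ih =>
      rw [map_add, Smap_add, pibar_single, Smap_single, add_sub_add_comm]
      exact add_mem (K_single p n τ c) ih

lemma sum_val_reindex (w : Rm p (n+1)) :
    ∑ k : ZMod p, w ^ ((k : ZMod p).val) = ∑ j ∈ Finset.range p, w ^ j := by
  haveI : NeZero p := ⟨hp.out.ne_zero⟩
  refine Finset.sum_nbij' (fun k => k.val) (fun j => (j : ZMod p)) ?_ ?_ ?_ ?_ ?_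
  · intro k _
    exact Finset.mem_range.mpr (ZMod.val_lt k)
  · intro j _
    exact Finset.mem_univ _
  · intro k _
    simp [ZMod.natCast_val, ZMod.cast_id]
  · intro j hj
    exact ZMod.val_cast_of_lt (Finset.mem_range.mp hj)
  · intro k _
    rfl

lemma nubar_eq (c : Rm p n) :
    ∑ τ : Gn p (n+1), MonoidAlgebra.single τ (c.coeff (projHom p n τ))
      = (tm p (n+1)) ^ (p ^ (n+1) - p ^ n) * Smap p n c := by
  have hreindex := Fintype.sum_bijective (Fmap p n) (Fmap_bijective p n)
    (fun kσ => MonoidAlgebra.single (Fmap p n kσ) (c.coeff (projHom p n (Fmap p n kσ))))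
    (fun τ => MonoidAlgebra.single τ (c.coeff (projHom p n τ))) (fun kσ => rfl)
  rw [← hreindex]
  have hterm : ∀ kσ : ZMod p × Gn p n,
      MonoidAlgebra.single (Fmap p n kσ) (c.coeff (projHom p n (Fmap p n kσ)))
        = (MonoidAlgebra.of (ZMod p) (Gn p (n+1)) ((gen p (n+1)) ^ (p ^ n))) ^ (kσ.1).val
          * MonoidAlgebra.single (sec p n kσ.2) (c.coeff kσ.2) := by
    rintro ⟨k, σ⟩
    have hpr : projHom p n (Fmap p n (k, σ)) = σ := proj_Fmap p n (k, σ)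
    rw [hpr]
    have h3 : (MonoidAlgebra.of (ZMod p) (Gn p (n+1)) ((gen p (n+1)) ^ (p ^ n))) ^ k.val
        = MonoidAlgebra.single ((gen p (n+1)) ^ (k.val * p ^ n)) (1 : ZMod p) := by
      rw [← map_pow, ← pow_mul, mul_comm (p ^ n) k.val]
      rfl
    rw [h3, MonoidAlgebra.single_mul_single, one_mul]
    rfl
  rw [Finset.sum_congr rfl fun kσ _ => hterm kσ]
  rw [Fintype.sum_prod_type]
  have hinner : ∀ k : ZMod p,
      ∑ σ : Gn p n, (MonoidAlgebra.of (ZMod p) (Gn p (n+1)) ((gen p (n+1)) ^ (p ^ n))) ^ k.val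
          * MonoidAlgebra.single (sec p n σ) (c.coeff σ)
      = (MonoidAlgebra.of (ZMod p) (Gn p (n+1)) ((gen p (n+1)) ^ (p ^ n))) ^ k.val
          * Smap p n c := by
    intro k
    rw [← Finset.mul_sum]
    rfl
  rw [Finset.sum_congr rfl fun k _ => hinner k, ← Finset.sum_mul]
  rw [sum_val_reindex, xi_eq]

end fiber

section padic
variable (p : ℕ) [hp : Fact p.Prime] (n : ℕ)

lemma sum_single_apply {k : Type*} [Semiring k] {G : Type*} [Fintype G] [DecidableEq G]
    (d : G → k) (τ0 : G) : (∑ τ : G, MonoidAlgebra.single τ (d τ)).coeff τ0 = d τ0 := by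
  rw [MonoidAlgebra.coeff_sum, Finset.sum_apply']
  rw [Finset.sum_eq_single τ0]
  · rw [MonoidAlgebra.coeff_single, Finsupp.single_eq_same]
  · intro τ _ hne
    rw [MonoidAlgebra.coeff_single, Finsupp.single_eq_of_ne' hne]
  · intro habs
    exact absurd (Finset.mem_univ τ0) habs

lemma nu_apply (x : Lam p n) (τ : Gn p (n+1)) :
    (nuMap p n x).coeff τ = x.coeff (projHom p n τ) := by
  rw [nuMap]
  exact sum_single_apply (fun τ => x.coeff (projHom p n τ)) τ

lemma cast_pow (m k : ℕ) :
    ((p : Lam p m)) ^ k = MonoidAlgebra.single 1 ((p : ℤ_[p]) ^ k) := by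
  have h1 : (p : Lam p m) = MonoidAlgebra.singleOneRingHom (p : ℤ_[p]) := by
    rw [map_natCast MonoidAlgebra.singleOneRingHom p]
  rw [h1, ← map_pow]
  rfl

lemma cast_pow_mul_apply (m k : ℕ) (x : Lam p m) (σ : Gn p m) :
    ((p : Lam p m) ^ k * x).coeff σ = (p : ℤ_[p]) ^ k * x.coeff σ := by
  rw [cast_pow, MonoidAlgebra.coeff_single_one_mul]

lemma dvd_of_forall_dvd (m k : ℕ) (x : Lam p m) (h : ∀ σ, (p : ℤ_[p]) ^ k ∣ x.coeff σ) :
    (p : Lam p m) ^ k ∣ x := by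
  classical
  have hpk : ((p : ℤ_[p]) ^ k) ≠ 0 :=
    pow_ne_zero _ (Nat.cast_ne_zero.mpr hp.out.ne_zero)
  set d : ℤ_[p] → ℤ_[p] := fun y => if hy : (p : ℤ_[p]) ^ k ∣ y then hy.choose else 0 with hd
  have hd0 : d 0 = 0 := by
    rw [hd]
    simp only
    rw [dif_pos (dvd_zero _)]
    have hspec := (dvd_zero ((p : ℤ_[p]) ^ k)).choose_spec
    exact (mul_eq_zero.mp hspec.symm).resolve_left hpk
  refine ⟨MonoidAlgebra.ofCoeff (Finsupp.mapRange d hd0 x.coeff), ?_⟩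
  refine MonoidAlgebra.ext (Finsupp.ext fun σ => ?_)
  rw [cast_pow_mul_apply, MonoidAlgebra.coeff_ofCoeff, Finsupp.mapRange_apply, hd]
  simp only
  rw [dif_pos (h σ)]
  exact (h σ).choose_spec

lemma nuMap_pmul (k : ℕ) (x : Lam p n) :
    nuMap p n ((p : Lam p n) ^ k * x) = (p : Lam p (n+1)) ^ k * nuMap p n x := by
  refine MonoidAlgebra.ext (Finsupp.ext fun τ => ?_)
  rw [nu_apply, cast_pow_mul_apply, cast_pow_mul_apply, nu_apply]

lemma red_nu (x : Lam p n) :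
    red p (n+1) (nuMap p n x)
      = ∑ τ : Gn p (n+1), MonoidAlgebra.single τ ((red p n x).coeff (projHom p n τ)) := by
  refine MonoidAlgebra.ext (Finsupp.ext fun τ0 => ?_)
  rw [red, MonoidAlgebra.coeff_ofCoeff, Finsupp.mapRange_apply, nu_apply]
  rw [sum_single_apply (fun τ => (red p n x).coeff (projHom p n τ)) τ0]
  rw [red, MonoidAlgebra.coeff_ofCoeff, Finsupp.mapRange_apply]

end padic

/-- `μ(ν(f)) = μ(f)` and `λ(ν(f)) = p^{n+1} - p^n + λ(f)`. -/
theorem stmt11 (p : ℕ) [Fact p.Prime] (n : ℕ) (f : Lam p n) (hf : f ≠ 0)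
    (m l : ℕ)
    (hm : (p : Lam p n) ^ m ∣ f ∧ ¬ (p : Lam p n) ^ (m+1) ∣ f)
    (f' : Lam p n) (hf' : f = (p : Lam p n) ^ m * f')
    (hl : red p n f' ∈ (augIdeal p n) ^ l ∧ red p n f' ∉ (augIdeal p n) ^ (l+1)) :
    ((p : Lam p (n+1)) ^ m ∣ nuMap p n f ∧ ¬ (p : Lam p (n+1)) ^ (m+1) ∣ nuMap p n f) ∧
    (red p (n+1) (nuMap p n f') ∈ (augIdeal p (n+1)) ^ (p ^ (n+1) - p ^ n + l) ∧
      red p (n+1) (nuMap p n f') ∉ (augIdeal p (n+1)) ^ (p ^ (n+1) - p ^ n + l + 1)) := by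
  have hppos := (Fact.out : p.Prime).pos
  constructor
  · constructor
    · rw [hf', nuMap_pmul]
      exact Dvd.intro _ rfl
    · rintro ⟨b, hb⟩
      apply hm.2
      refine dvd_of_forall_dvd p n (m+1) f fun σ => ?_
      have h1 : f.coeff σ = (nuMap p n f).coeff (sec p n σ) := by
        rw [nu_apply, proj_sec]
      rw [h1, hb, cast_pow_mul_apply]
      exact Dvd.intro _ rfl
  · set t' := tm p (n+1) with ht'
    set tn := tm p n with htn
    set e := p ^ (n+1) - p ^ n with he
    set c := red p n f' with hc
    have hpnle : p ^ n ≤ p ^ (n+1) := Nat.pow_le_pow_right hppos n.le_succ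
    have hepn : e + p ^ n = p ^ (n+1) := by omega
    have hlpn : l < p ^ n := by
      by_contra hcon
      push_neg at hcon
      apply hl.2
      have h0 : c = 0 := by
        have h1 := hl.1
        rw [augIdeal_eq_span, Ideal.span_singleton_pow, Ideal.mem_span_singleton] at h1
        obtain ⟨a, ha⟩ := h1
        have h2 : tn ^ l = 0 := by
          have h3 : tn ^ l = tn ^ (p ^ n) * tn ^ (l - p ^ n) := by
            rw [← pow_add]
            congr 1
            omega
          rw [h3, htn, t_pow_card, zero_mul]
        rw [ha, h2, zero_mul]
      rw [h0]
      exact zero_mem _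
    obtain ⟨a, ha⟩ : ∃ a, c = tn ^ l * a := by
      have h1 := hl.1
      rw [augIdeal_eq_span, Ideal.span_singleton_pow, Ideal.mem_span_singleton] at h1
      exact h1
    have hkey : red p (n+1) (nuMap p n f') = t' ^ (e + l) * Smap p n a := by
      rw [red_nu, ← hc, nubar_eq]
      have hz : pibar p n (t' ^ l * Smap p n a) = c := by
        rw [map_mul, map_pow, ht', pibar_t, pibar_Smap, ← htn, ← ha]
      have hK := K_lemma p n (t' ^ l * Smap p n a)
      rw [hz, ← ht', Ideal.mem_span_singleton] at hK
      obtain ⟨dd, hdd⟩ := hK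
      have hS : Smap p n c = t' ^ l * Smap p n a - t' ^ (p ^ n) * dd := by
        rw [← hdd]
        ring
      have hzero : t' ^ e * (t' ^ (p ^ n) * dd) = 0 := by
        rw [← mul_assoc, ← pow_add, hepn, ht', t_pow_card, zero_mul]
      rw [hS, mul_sub, hzero, sub_zero, ← mul_assoc, ← pow_add]
    constructor
    · rw [augIdeal_eq_span, Ideal.span_singleton_pow, Ideal.mem_span_singleton, hkey, ← ht']
      exact Dvd.intro _ rfl
    · intro hmem
      rw [augIdeal_eq_span, Ideal.span_singleton_pow, Ideal.mem_span_singleton, hkey,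
        ← ht'] at hmem
      obtain ⟨b, hb⟩ := hmem
      have hzero : t' ^ (e + l) * (Smap p n a - t' * b) = 0 := by
        rw [mul_sub, hb]
        ring
      have hle2 : e + l ≤ p ^ (n+1) := by omega
      rw [ht'] at hzero
      obtain ⟨d2, hd2⟩ := ann_lemma p (n+1) (e + l) hle2 _ hzero
      have hexp : p ^ (n+1) - (e + l) = p ^ n - l := by omega
      rw [hexp] at hd2
      have hpi := congrArg (pibar p n) hd2
      rw [map_sub, map_mul, map_mul, map_pow, pibar_Smap, pibar_t, ← htn] at hpi
      apply hl.2
      have ha2 : a = tn * pibar p n b + pibar p n d2 * tn ^ (p ^ n - l) := by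
        linear_combination hpi
      have hz2 : tn ^ l * tn ^ (p ^ n - l) = 0 := by
        rw [← pow_add]
        have h6 : l + (p ^ n - l) = p ^ n := by omega
        rw [h6, htn, t_pow_card]
      have hc2 : c = tn ^ (l + 1) * pibar p n b := by
        rw [ha, ha2, mul_add]
        have h5 : tn ^ l * (pibar p n d2 * tn ^ (p ^ n - l))
            = pibar p n d2 * (tn ^ l * tn ^ (p ^ n - l)) := by ring
        rw [h5, hz2, mul_zero, add_zero]
        ring
      rw [augIdeal_eq_span, Ideal.span_singleton_pow, Ideal.mem_span_singleton, hc2, ← htn]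
      exact Dvd.intro _ rfl
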